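/- In the setting of the block factorization (V a complex vector space, L₀, P : V → V linear, c : V → V invertible linear, L_s = L₀ + s·(c∘P) − s²·c, 𝒜(Ψ,Ψ') = (Ψ', c⁻¹(L₀Ψ) + PΨ')): if L_s : V → V is bijective with inverse L_s⁻¹, then the operator ℛ(s) := [[id, 0],[s·id, id]] ∘ [[L_s⁻¹ ∘ c, 0],[0, id]] ∘ [[−(P − s·id), id],[id, 0]] on V × V is a two-sided inverse of 𝒜 − s·id. -/
import Mathlib


/-- A block operator `[[A,B],[C,D]]` acting on `V × V` by
`(f,g) ↦ (Af + Bg, Cf + Dg)`. -/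
def blockOp {V : Type*} [AddCommGroup V] (A B C D : V → V) :
    V × V → V × V :=
  fun p => (A p.1 + B p.2, C p.1 + D p.2)

/-- Explicit resolvent of the infinitesimal generator: if `L_s` is bijective with
inverse `L_s⁻¹`, then
`ℛ(s) = [[id, 0],[s·id, id]] ∘ [[L_s⁻¹ ∘ c, 0],[0, id]] ∘ [[−(P − s·id), id],[id, 0]]`
is a two-sided inverse of `𝒜 − s·id`. -/
theorem stmt_14 {V : Type*} [AddCommGroup V] [Module ℂ V]
    (L₀ P : V →ₗ[ℂ] V) (c : V ≃ₗ[ℂ] V) (s : ℂ)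
    (Ls Lsinv : V → V)
    (hLs : Ls = fun v => L₀ v + s • c (P v) - s ^ 2 • c v)
    (hleft : Function.LeftInverse Lsinv Ls)
    (hright : Function.RightInverse Lsinv Ls)
    (𝒜 : V × V → V × V)
    (h𝒜 : 𝒜 = fun p => (p.2, c.symm (L₀ p.1) + P p.2))
    (R : V × V → V × V)
    (hR : R = fun p =>
      blockOp (fun v => v) (fun _ => 0) (fun v => s • v) (fun v => v)
        (blockOp (fun v => Lsinv (c v)) (fun _ => 0) (fun _ => 0) (fun v => v)
          (blockOp (fun v => -(P v - s • v)) (fun v => v) (fun v => v) (fun _ => 0) p))) :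
    (∀ p : V × V, 𝒜 (R p) - s • R p = p) ∧
    (∀ p : V × V, R (𝒜 p - s • p) = p) := by
  subst hLs h𝒜 hR
  constructor
  · intro p
    simp only [blockOp, add_zero, zero_add]
    set w : V := -(P p.1 - s • p.1) + p.2 with hw
    set u : V := Lsinv (c w) with hu
    have h1 : c.symm (L₀ u) + s • P u - s ^ 2 • u = w := by
      have h2 : c.symm (L₀ u + s • c (P u) - s ^ 2 • c u) = w := by
        rw [show L₀ u + s • c (P u) - s ^ 2 • c u = c w from hright (c w)]
        exact c.symm_apply_apply w
      rw [← h2]; simp [map_add, map_sub, map_smul]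
    have hgoal2 : c.symm (L₀ u) + P (s • u + p.1) - s • (s • u + p.1) = p.2 := by
      have h3 : c.symm (L₀ u) = w - s • P u + s ^ 2 • u := by
        rw [← h1]; abel
      rw [h3, map_add, map_smul, hw]
      module
    have hgoal1 : s • u + p.1 - s • u = p.1 := by abel
    exact Prod.ext hgoal1 hgoal2
  · rintro ⟨x, y⟩
    simp only [blockOp, Prod.smul_mk, Prod.mk_sub_mk, add_zero, zero_add]
    have hw' : -(P (y - s • x) - s • (y - s • x)) + (c.symm (L₀ x) + P y - s • y)
        = c.symm (L₀ x) + (s • P x - s ^ 2 • x) := by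
      rw [map_sub, map_smul]; module
    have hcw : c (-(P (y - s • x) - s • (y - s • x)) + (c.symm (L₀ x) + P y - s • y))
        = L₀ x + s • c (P x) - s ^ 2 • c x := by
      rw [hw', map_add, c.apply_symm_apply, map_sub, map_smul, map_smul]
      abel
    have hu : Lsinv (c (-(P (y - s • x) - s • (y - s • x))
        + (c.symm (L₀ x) + P y - s • y))) = x := by
      rw [hcw]; exact hleft x
    rw [Prod.mk.injEq]
    exact ⟨hu, by rw [hu]; abel⟩
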